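/- Let S(t) be a complex polynomial of degree m and let Q(t) be a formal power series solution of the ODE (t·Q'' + Q')·Q − t·(Q')² = S·Q with Q(0) ≠ 0, such that Q(0)^{−1} is a common zero of the polynomials f_S^i for all m+3 ≤ i ≤ 2m+3. Then Q(t) is a polynomial of degree exactly m+2. -/

import Mathlib

open PowerSeries

open Polynomial in
/-- The sequence of polynomials `f_S^i` associated to a coefficient sequence `s`. -/
noncomputable def fseq {R : Type*} [CommRing R] [Algebra ℚ R] (s : ℕ → R) : ℕ → Polynomial R
  | 0 => 0
  | 1 => C (s 0)
  | (k+2) =>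
      ((((k : ℚ)+2)^2)⁻¹) •
        (Polynomial.C (s (k+1)) + Polynomial.X *
          ∑ i ∈ (Finset.range (k+1)).attach,
            (Polynomial.C (s i.1) - ((((i.1 : ℤ))+1) * (2*(i.1 : ℤ)+1-((k : ℤ)+1))) • fseq s (i.1+1) ) *
              fseq s (k+1-i.1))
  termination_by k => k
  decreasing_by
  all_goals (first
    | omega
    | (have h := i.2; rw [Finset.mem_range] at h; omega))

/-- A formal power series `Q` solves the ODE
`(t·Q''(t) + Q'(t))·Q(t) − t·(Q'(t))² = S(t)·Q(t)` for the data `S`. -/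
def SolvesODE (S Q : PowerSeries ℂ) : Prop :=
  (X * (d⁄dX ℂ) ((d⁄dX ℂ) Q) + (d⁄dX ℂ) Q) * Q - X * ((d⁄dX ℂ) Q) ^ 2 = S * Q

open Finset in
private lemma coeffA (Q : PowerSeries ℂ) (n : ℕ) :
    coeff n (X * (d⁄dX ℂ) ((d⁄dX ℂ) Q) + (d⁄dX ℂ) Q) = ((n:ℂ)+1)^2 * coeff (n+1) Q := by
  cases n with
  | zero =>
    rw [map_add]
    have h1 : coeff 0 (X * (d⁄dX ℂ) ((d⁄dX ℂ) Q)) = 0 := by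
      simp [PowerSeries.coeff_zero_eq_constantCoeff]
    rw [h1, zero_add, PowerSeries.coeff_derivative]
    push_cast; ring
  | succ n =>
    rw [map_add, PowerSeries.coeff_succ_X_mul]
    simp only [PowerSeries.coeff_derivative]
    push_cast; ring

open Finset in
private lemma coeffB (Q : PowerSeries ℂ) (k : ℕ) :
    coeff k (X * ((d⁄dX ℂ) Q)^2)
      = ∑ i ∈ range k, ((i:ℂ)+1) * ((k-i : ℕ):ℂ) * coeff (i+1) Q * coeff (k-i) Q := by
  cases k with
  | zero => simp
  | succ n =>
    rw [PowerSeries.coeff_succ_X_mul, pow_two, PowerSeries.coeff_mul,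
      Finset.Nat.sum_antidiagonal_eq_sum_range_succ_mk]
    apply Finset.sum_congr rfl
    intro i hi
    rw [Finset.mem_range] at hi
    rw [PowerSeries.coeff_derivative, PowerSeries.coeff_derivative]
    have h1 : n + 1 - i = (n - i) + 1 := by omega
    rw [h1]
    push_cast [Nat.cast_sub (by omega : i ≤ n)]
    ring

open Finset in
private lemma ode_coeff (S : Polynomial ℂ) (Q : PowerSeries ℂ)
    (hode : (X * (d⁄dX ℂ) ((d⁄dX ℂ) Q) + (d⁄dX ℂ) Q) * Q - X * ((d⁄dX ℂ) Q) ^ 2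
      = (S : PowerSeries ℂ) * Q) (k : ℕ) :
    ∑ j ∈ range (k+1), ((j:ℂ)+1)^2 * coeff (j+1) Q * coeff (k-j) Q
      - ∑ i ∈ range k, ((i:ℂ)+1) * ((k-i : ℕ):ℂ) * coeff (i+1) Q * coeff (k-i) Q
    = ∑ i ∈ range (k+1), S.coeff i * coeff (k-i) Q := by
  have h := congrArg (coeff k) hode
  rw [map_sub, coeffB, PowerSeries.coeff_mul, PowerSeries.coeff_mul,
    Finset.Nat.sum_antidiagonal_eq_sum_range_succ_mk,
    Finset.Nat.sum_antidiagonal_eq_sum_range_succ_mk] at h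
  simp only [coeffA, Polynomial.coeff_coe] at h
  exact h

open Finset in
private lemma ode_rec (S : Polynomial ℂ) (Q : PowerSeries ℂ)
    (hode : (X * (d⁄dX ℂ) ((d⁄dX ℂ) Q) + (d⁄dX ℂ) Q) * Q - X * ((d⁄dX ℂ) Q) ^ 2
      = (S : PowerSeries ℂ) * Q) (k : ℕ) :
    ((k:ℂ)+1)^2 * coeff (k+1) Q * coeff 0 Q
      = S.coeff k * coeff 0 Q
        + ∑ i ∈ range k,
            (S.coeff i - ((i:ℂ)+1) * (2*(i:ℂ)+1-(k:ℂ)) * coeff (i+1) Q) * coeff (k-i) Q := by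
  have h := ode_coeff S Q hode k
  rw [Finset.sum_range_succ, Finset.sum_range_succ (f := fun i => S.coeff i * coeff (k-i) Q)] at h
  simp only [Nat.sub_self] at h
  have hsum : ∑ i ∈ range k,
      (S.coeff i - ((i:ℂ)+1) * (2*(i:ℂ)+1-(k:ℂ)) * coeff (i+1) Q) * coeff (k-i) Q
      = ∑ i ∈ range k, S.coeff i * coeff (k-i) Q
        + (∑ i ∈ range k, ((i:ℂ)+1) * ((k-i : ℕ):ℂ) * coeff (i+1) Q * coeff (k-i) Q
          - ∑ j ∈ range k, ((j:ℂ)+1)^2 * coeff (j+1) Q * coeff (k-j) Q) := by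
    rw [← Finset.sum_sub_distrib, ← Finset.sum_add_distrib]
    apply Finset.sum_congr rfl
    intro i hi
    rw [Finset.mem_range] at hi
    rw [Nat.cast_sub (le_of_lt hi)]
    ring
  rw [hsum]
  linear_combination h

open Finset in
private lemma fseq_eval (s : ℕ → ℂ) (u : ℂ) (k : ℕ) :
    (fseq s (k+2)).eval u
      = (((k:ℂ)+2)^2)⁻¹ *
        (s (k+1) + u * ∑ i ∈ range (k+1),
          (s i - ((i:ℂ)+1) * (2*(i:ℂ)+1-((k:ℂ)+1)) * (fseq s (i+1)).eval u)
            * (fseq s (k+1-i)).eval u) := by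
  have hsum : ∑ i ∈ (range (k+1)).attach, Polynomial.eval u
        ((Polynomial.C (s i.1) - ((((i.1:ℤ))+1) * (2*(i.1:ℤ)+1-((k:ℤ)+1))) • fseq s (i.1+1))
          * fseq s (k+1-i.1))
      = ∑ i ∈ range (k+1),
          (s i - ((i:ℂ)+1) * (2*(i:ℂ)+1-((k:ℂ)+1)) * (fseq s (i+1)).eval u)
            * (fseq s (k+1-i)).eval u := by
    rw [← Finset.sum_attach (range (k+1))
      (fun i => (s i - ((i:ℂ)+1) * (2*(i:ℂ)+1-((k:ℂ)+1)) * (fseq s (i+1)).eval u)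
        * (fseq s (k+1-i)).eval u)]
    apply Finset.sum_congr rfl
    intro i _
    rw [Polynomial.eval_mul, Polynomial.eval_sub, Polynomial.eval_C, Polynomial.eval_smul,
      zsmul_eq_mul]
    push_cast
    ring
  rw [fseq]
  rw [Polynomial.eval_smul, Polynomial.eval_add, Polynomial.eval_C, Polynomial.eval_mul,
    Polynomial.eval_X, Polynomial.eval_finset_sum, hsum, Rat.smul_def]
  push_cast
  ring

open Finset in
private lemma coeff_fseq (S : Polynomial ℂ) (Q : PowerSeries ℂ)
    (hode : (X * (d⁄dX ℂ) ((d⁄dX ℂ) Q) + (d⁄dX ℂ) Q) * Q - X * ((d⁄dX ℂ) Q) ^ 2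
      = (S : PowerSeries ℂ) * Q)
    (h0 : constantCoeff Q ≠ 0) :
    ∀ n, 1 ≤ n →
      coeff n Q = (fseq (fun j => S.coeff j) n).eval ((constantCoeff Q)⁻¹) := by
  have hc0 : coeff 0 Q ≠ 0 := by rwa [PowerSeries.coeff_zero_eq_constantCoeff]
  have huq : (constantCoeff Q)⁻¹ * coeff 0 Q = 1 := by
    rw [PowerSeries.coeff_zero_eq_constantCoeff]; exact inv_mul_cancel₀ h0
  intro n
  induction n using Nat.strong_induction_on with
  | _ n ih =>
    intro hn
    set u := (constantCoeff Q)⁻¹ with hu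
    match n with
    | 1 =>
      have h := ode_rec S Q hode 0
      simp only [Finset.range_zero, Finset.sum_empty, add_zero] at h
      have h1 : coeff 1 Q * coeff 0 Q = S.coeff 0 * coeff 0 Q := by
        push_cast at h
        linear_combination h
      have h2 := mul_right_cancel₀ hc0 h1
      rw [h2, fseq, Polynomial.eval_C]
    | (k+2) =>
      have h := ode_rec S Q hode (k+1)
      push_cast at h
      have hS2 : ∑ i ∈ range (k+1),
          (S.coeff i - ((i:ℂ)+1) * (2*(i:ℂ)+1-((k:ℂ)+1))
            * (fseq (fun j => S.coeff j) (i+1)).eval u)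
            * (fseq (fun j => S.coeff j) (k+1-i)).eval u
          = ∑ i ∈ range (k+1),
            (S.coeff i - ((i:ℂ)+1) * (2*(i:ℂ)+1-((k:ℂ)+1)) * coeff (i+1) Q)
              * coeff (k+1-i) Q := by
        apply Finset.sum_congr rfl
        intro i hi
        rw [Finset.mem_range] at hi
        rw [← ih (i+1) (by omega) (by omega), ← ih (k+1-i) (by omega) (by omega)]
      rw [fseq_eval, hS2]
      have hk2 : ((k:ℂ)+2) ≠ 0 := by
        have : ((k+2:ℕ):ℂ) ≠ 0 := Nat.cast_ne_zero.mpr (by omega)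
        push_cast at this; exact this
      rw [eq_inv_mul_iff_mul_eq₀ (pow_ne_zero 2 hk2)]
      apply mul_right_cancel₀ hc0
      have hkk : (k+1+1) = (k+2) := rfl
      rw [hkk] at h
      linear_combination h - (∑ i ∈ range (k+1),
        (S.coeff i - ((i:ℂ)+1) * (2*(i:ℂ)+1-((k:ℂ)+1)) * coeff (i+1) Q)
          * coeff (k+1-i) Q) * huq

open Finset in
private lemma vanish (S : Polynomial ℂ) (m : ℕ) (hS : S.degree = m) (Q : PowerSeries ℂ)
    (hode : (X * (d⁄dX ℂ) ((d⁄dX ℂ) Q) + (d⁄dX ℂ) Q) * Q - X * ((d⁄dX ℂ) Q) ^ 2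
      = (S : PowerSeries ℂ) * Q)
    (h0 : constantCoeff Q ≠ 0)
    (hroot : ∀ i : ℕ, m + 3 ≤ i → i ≤ 2 * m + 3 →
      (fseq (fun n => S.coeff n) i).eval ((constantCoeff Q)⁻¹) = 0) :
    ∀ n, m + 3 ≤ n → coeff n Q = 0 := by
  have hc0 : coeff 0 Q ≠ 0 := by rwa [PowerSeries.coeff_zero_eq_constantCoeff]
  intro n
  induction n using Nat.strong_induction_on with
  | _ n ih =>
    intro hn
    by_cases hsmall : n ≤ 2*m+3
    · rw [coeff_fseq S Q hode h0 n (by omega)]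
      exact hroot n hn hsmall
    · obtain ⟨K, rfl⟩ : ∃ K, n = K+1 := ⟨n-1, by omega⟩
      have hK : 2*m+3 ≤ K := by omega
      have h := ode_rec S Q hode K
      have hsK : S.coeff K = 0 := Polynomial.coeff_eq_zero_of_degree_lt
        (by rw [hS]; exact_mod_cast (by omega : m < K))
      have hsum0 : ∑ i ∈ range K,
          (S.coeff i - ((i:ℂ)+1)*(2*(i:ℂ)+1-(K:ℂ)) * coeff (i+1) Q) * coeff (K-i) Q = 0 := by
        apply Finset.sum_eq_zero
        intro i hi
        rw [Finset.mem_range] at hi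
        by_cases h1 : m+3 ≤ K - i
        · rw [ih (K-i) (by omega) h1, mul_zero]
        · have hsi : S.coeff i = 0 := Polynomial.coeff_eq_zero_of_degree_lt
            (by rw [hS]; exact_mod_cast (by omega : m < i))
          by_cases h2 : m+3 ≤ i+1
          · rw [ih (i+1) (by omega) h2, hsi]
            ring
          · have hi2 : i = m+1 := by omega
            have hK2 : K = 2*m+3 := by omega
            subst hi2 hK2
            rw [hsi]
            have hz : (2*((m+1:ℕ):ℂ)+1-((2*m+3:ℕ):ℂ)) = 0 := by push_cast; ring
            rw [hz]
            ring
      rw [hsK, hsum0, zero_mul, zero_add] at h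
      have hKc : ((K:ℂ)+1) ≠ 0 := by
        have : ((K+1:ℕ):ℂ) ≠ 0 := Nat.cast_ne_zero.mpr (by omega)
        push_cast at this; exact this
      rcases mul_eq_zero.mp h with h' | h'
      · rcases mul_eq_zero.mp h' with h'' | h''
        · exact absurd h'' (pow_ne_zero 2 hKc)
        · exact h''
      · exact absurd h' hc0

open Finset in
/-- Let `S` be a complex polynomial of degree `m` and let `Q` be a
formal power series solution of the ODE with `Q(0) ≠ 0`, such that `Q(0)⁻¹` is a common
zero of `f_S^i` for all `m+3 ≤ i ≤ 2m+3`. Then `Q` is a polynomial of degree exactly `m+2`. -/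
theorem stmt8 (S : Polynomial ℂ) (m : ℕ) (hS : S.degree = m)
    (Q : PowerSeries ℂ)
    (hode : SolvesODE (S : PowerSeries ℂ) Q)
    (h0 : constantCoeff Q ≠ 0)
    (hroot : ∀ i : ℕ, m + 3 ≤ i → i ≤ 2 * m + 3 →
      (fseq (fun n => S.coeff n) i).eval ((constantCoeff Q)⁻¹) = 0) :
    ∃ P : Polynomial ℂ, P.degree = (m + 2 : ℕ) ∧ Q = (P : PowerSeries ℂ) := by
  classical
  have hode' : (X * (d⁄dX ℂ) ((d⁄dX ℂ) Q) + (d⁄dX ℂ) Q) * Q - X * ((d⁄dX ℂ) Q) ^ 2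
      = (S : PowerSeries ℂ) * Q := hode
  have hc0 : coeff 0 Q ≠ 0 := by rwa [PowerSeries.coeff_zero_eq_constantCoeff]
  have hvan : ∀ n, m+3 ≤ n → coeff n Q = 0 := vanish S m hS Q hode' h0 hroot
  set d := Nat.findGreatest (fun n => coeff n Q ≠ 0) (m+2) with hd
  have hdne : coeff d Q ≠ 0 := Nat.findGreatest_spec (P := fun n => coeff n Q ≠ 0) (Nat.zero_le (m+2)) hc0
  have hdle : d ≤ m+2 := Nat.findGreatest_le _
  have hgt : ∀ n, d < n → coeff n Q = 0 := by
    intro n hn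
    by_cases h1 : n ≤ m+2
    · exact not_not.mp (Nat.findGreatest_is_greatest hn h1)
    · exact hvan n (by omega)
  have hdeq : d = m+2 := by
    by_contra hne
    have hlt : d ≤ m+1 := by omega
    have h := ode_coeff S Q hode' (m+d)
    have hrhs : ∑ i ∈ range (m+d+1), S.coeff i * coeff (m+d-i) Q
        = S.coeff m * coeff d Q := by
      rw [Finset.sum_eq_single_of_mem m (Finset.mem_range.mpr (by omega))]
      · rw [show m+d-m = d from by omega]
      · intro i hi hne'
        rw [Finset.mem_range] at hi
        rcases lt_or_gt_of_ne hne' with h' | h'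
        · rw [hgt (m+d-i) (by omega), mul_zero]
        · rw [Polynomial.coeff_eq_zero_of_degree_lt (by rw [hS]; exact_mod_cast h'), zero_mul]
    have hlhs1 : ∑ j ∈ range (m+d+1), ((j:ℂ)+1)^2 * coeff (j+1) Q * coeff (m+d-j) Q
        = ∑ i ∈ range (m+d), ((i:ℂ)+1) * ((m+d-i:ℕ):ℂ) * coeff (i+1) Q
            * coeff (m+d-i) Q := by
      rw [Finset.sum_range_succ]
      rw [hgt (m+d+1) (by omega), mul_zero, zero_mul, add_zero]
      apply Finset.sum_congr rfl
      intro j hj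
      rw [Finset.mem_range] at hj
      by_cases hq1 : coeff (j+1) Q = 0
      · rw [hq1]; ring
      · by_cases hq2 : coeff (m+d-j) Q = 0
        · rw [hq2]; ring
        · have hj1 : j+1 ≤ d := by
            by_contra hc
            exact hq1 (hgt (j+1) (by omega))
          have hj2 : m+d-j ≤ d := by
            by_contra hc
            exact hq2 (hgt (m+d-j) (by omega))
          have hjm : j = m := by omega
          have hd1 : d = m+1 := by omega
          rw [hjm, show m+d-m = d from by omega, hd1]
          push_cast
          ring
    rw [hlhs1, sub_self, hrhs] at h
    exact (mul_ne_zero (Polynomial.coeff_ne_zero_of_eq_degree hS) hdne) h.symm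
  refine ⟨PowerSeries.trunc (m+3) Q, ?_, ?_⟩
  · apply Polynomial.degree_eq_of_le_of_coeff_ne_zero
    · have hlt := PowerSeries.degree_trunc_lt Q (m+3)
      have : ((m+3:ℕ) : WithBot ℕ) = ((m+2:ℕ) : WithBot ℕ) + 1 := by push_cast; ring
      rw [this] at hlt
      revert hlt
      cases (PowerSeries.trunc (m+3) Q).degree with
      | bot => intro _; exact bot_le
      | coe a =>
        intro h
        have h' : a < m+2+1 := WithBot.coe_lt_coe.mp h
        exact WithBot.coe_le_coe.mpr (by omega : a ≤ m+2)
    · rw [PowerSeries.coeff_trunc, if_pos (by omega : m+2 < m+3), ← hdeq]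
      exact hdne
  · ext n
    rw [Polynomial.coeff_coe, PowerSeries.coeff_trunc]
    by_cases hn : n < m+3
    · rw [if_pos hn]
    · rw [if_neg hn, hvan n (by omega)]
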